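/- Let V(u) = Σ_{1≤j<k≤n} [δ_{jk} U + W](|u_j - u_k|²) where δ_{jk} = 1 if |j-k| = 1 or {j,k} = {1,n} and 0 otherwise, with U, W ∈ C¹ on (0,∞). Then at the regular n-gon configuration a_j = a e^{ijζ} (ζ = 2π/n), the gradient with respect to u_j equals a_j · (2U'(a²s_1²)s_1² + Σ_{k=1}^{n-1} W'(a²s_k²)s_k²), where s_k = 2 sin(kπ/n). In particular, if U'(a²s_1²) = -(1/(2s_1²)) Σ_{k=1}^{n-1} W'(a²s_k²)s_k², then the n-gon is a critical point of V. -/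

import Mathlib

/-- The potential of the circular chain: `V(u) = Σ_{j<k} [δ_{jk} U + W](|u_j - u_k|²)`,
where `δ_{jk} = 1` iff `j,k` are adjacent in the cycle (indices `0,…,n-1`). -/
noncomputable def chainV (n : ℕ) (U W : ℝ → ℝ) (u : Fin n → ℂ) : ℝ :=
  ∑ j : Fin n, ∑ k : Fin n, if j < k then
    ((if j.val + 1 = k.val ∨ (j.val = 0 ∧ k.val = n - 1)
        then U (‖u j - u k‖ ^ 2) else 0)
      + W (‖u j - u k‖ ^ 2))
  else 0

/-- The real-linear functional `h ↦ ⟨G, h⟩_{ℝ²} = re(conj G · h)` on `ℂ ≅ ℝ²`;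
this is the derivative functional of a function whose (real) gradient is `G`. -/
noncomputable def gradFunctional (G : ℂ) : ℂ →L[ℝ] ℝ :=
  Complex.reCLM.comp
    (((ContinuousLinearMap.mul ℂ ℂ) ((starRingEnd ℂ) G)).restrictScalars ℝ)

namespace Stmt10Aux

open Complex Finset
open Fin.NatCast



/-- `2 sin (kπ/n)` -/
noncomputable def sN (n k : ℕ) : ℝ := 2 * Real.sin ((k : ℝ) * Real.pi / n)

/-- `exp (i M ζ)` with `ζ = 2π/n` -/
noncomputable def ec (n M : ℕ) : ℂ :=
  Complex.exp (Complex.I * (M : ℂ) * ((2 * Real.pi / n : ℝ) : ℂ))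

/-- the regular n-gon -/
noncomputable def ngon (n : ℕ) (a : ℝ) : Fin n → ℂ := fun j => (a : ℂ) * ec n j.val

lemma gradFunctional_apply (G h : ℂ) : gradFunctional G h = ((starRingEnd ℂ) G * h).re := rfl

lemma gradFunctional_zero : gradFunctional 0 = 0 := by
  ext h; simp [gradFunctional_apply]

lemma gradFunctional_sum {ι} (s : Finset ι) (f : ι → ℂ) :
    gradFunctional (∑ i ∈ s, f i) = ∑ i ∈ s, gradFunctional (f i) := by
  ext h
  simp [gradFunctional_apply, map_sum, Finset.sum_mul, Complex.re_sum,
    ContinuousLinearMap.sum_apply]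

lemma gradFunctional_real_smul (d : ℝ) (G : ℂ) :
    d • gradFunctional G = gradFunctional ((d : ℂ) * G) := by
  ext h
  simp [gradFunctional_apply, Complex.mul_re, Complex.mul_im]
  ring

lemma hasFDerivAt_normSq_sub (c z : ℂ) :
    HasFDerivAt (fun w : ℂ => Complex.normSq (w - c)) (gradFunctional (2 * (z - c))) z := by
  have hre : HasFDerivAt (fun w : ℂ => (w - c).re) (Complex.reCLM : ℂ →L[ℝ] ℝ) z :=
    by have := (Complex.reCLM.hasFDerivAt (x := z - c)).comp z ((hasFDerivAt_id (𝕜 := ℝ) z).sub_const c); exact this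
  have him : HasFDerivAt (fun w : ℂ => (w - c).im) (Complex.imCLM : ℂ →L[ℝ] ℝ) z :=
    by have := (Complex.imCLM.hasFDerivAt (x := z - c)).comp z ((hasFDerivAt_id (𝕜 := ℝ) z).sub_const c); exact this
  have h1 := (hre.mul hre).add (him.mul him)
  have h2 : (fun w : ℂ => Complex.normSq (w - c))
      = fun w : ℂ => (w - c).re * (w - c).re + (w - c).im * (w - c).im := by
    funext w; simp [Complex.normSq_apply]
  rw [h2]
  refine h1.congr_fderiv ?_
  ext h
  simp [gradFunctional_apply, Complex.mul_re, Complex.mul_im]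
  ring

lemma hasFDerivAt_comp_sq_abs {f : ℝ → ℝ} {d : ℝ} (c z : ℂ)
    (hf : HasDerivAt f d (Complex.normSq (z - c))) :
    HasFDerivAt (fun w : ℂ => f (‖w - c‖ ^ 2))
      (gradFunctional (((2 * d : ℝ) : ℂ) * (z - c))) z := by
  have h := hf.comp_hasFDerivAt z (hasFDerivAt_normSq_sub c z)
  have heq : (fun w : ℂ => f (‖w - c‖ ^ 2))
      = f ∘ (fun w : ℂ => Complex.normSq (w - c)) := by
    funext w; simp [Complex.sq_norm, Function.comp]
  rw [heq]
  refine h.congr_fderiv ?_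
  rw [gradFunctional_real_smul]
  congr 1
  push_cast; ring

lemma ec_eq (n M : ℕ) : ec n M = Complex.exp (((M : ℝ) * (2 * Real.pi / n) : ℝ) * Complex.I) := by
  rw [ec]; congr 1; push_cast; ring

lemma ec_mod (n : ℕ) (hn : n ≠ 0) (M : ℕ) : ec n M = ec n (M % n) := by
  have hnC : ((n : ℂ)) ≠ 0 := Nat.cast_ne_zero.mpr hn
  conv_lhs => rw [← Nat.div_add_mod M n]
  rw [ec, ec]
  have hsplit : Complex.I * ((n * (M / n) + M % n : ℕ) : ℂ) * ((2 * Real.pi / n : ℝ) : ℂ)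
      = ((M / n : ℕ) : ℂ) * (2 * (Real.pi : ℂ) * Complex.I)
        + Complex.I * ((M % n : ℕ) : ℂ) * ((2 * Real.pi / n : ℝ) : ℂ) := by
    push_cast
    field_simp
  rw [hsplit, Complex.exp_add, Complex.exp_nat_mul, Complex.exp_two_pi_mul_I, one_pow, one_mul]

lemma ec_add (n M₁ M₂ : ℕ) : ec n (M₁ + M₂) = ec n M₁ * ec n M₂ := by
  rw [ec, ec, ec, ← Complex.exp_add]; congr 1; push_cast; ring

lemma sN_sq (n M : ℕ) : sN n M ^ 2 = 2 - 2 * Real.cos ((M : ℝ) * (2 * Real.pi / n)) := by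
  have h : (M : ℝ) * (2 * Real.pi / n) = 2 * ((M : ℝ) * Real.pi / n) := by ring
  rw [sN, h, Real.cos_two_mul]
  nlinarith [Real.sin_sq_add_cos_sq ((M : ℝ) * Real.pi / n)]

lemma normSq_one_sub_ec (n M : ℕ) : Complex.normSq (1 - ec n M) = sN n M ^ 2 := by
  rw [ec_eq, sN_sq]
  set θ := (M : ℝ) * (2 * Real.pi / n) with hθ
  have h1 : (1 - Complex.exp ((θ : ℂ) * Complex.I)).re = 1 - Real.cos θ := by
    simp [Complex.sub_re, Complex.exp_ofReal_mul_I_re]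
  have h2 : (1 - Complex.exp ((θ : ℂ) * Complex.I)).im = -Real.sin θ := by
    simp [Complex.sub_im, Complex.exp_ofReal_mul_I_im]
  rw [Complex.normSq_apply, h1, h2]
  nlinarith [Real.sin_sq_add_cos_sq θ]

lemma ec_pair (n : ℕ) (hn : n ≠ 0) (M₁ M₂ : ℕ) (h : M₁ + M₂ = n) :
    ec n M₁ + ec n M₂ = ((2 * Real.cos ((M₁ : ℝ) * (2 * Real.pi / n)) : ℝ) : ℂ) := by
  have hnR : ((n : ℝ)) ≠ 0 := Nat.cast_ne_zero.mpr hn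
  have h2 : (M₂ : ℝ) * (2 * Real.pi / n) = 2 * Real.pi - (M₁ : ℝ) * (2 * Real.pi / n) := by
    have hM : (M₂ : ℝ) = n - M₁ := by
      have : ((M₁ + M₂ : ℕ) : ℝ) = n := by rw [h]
      push_cast at this; linarith
    rw [hM]; field_simp
  rw [ec_eq, ec_eq, h2]
  set θ := (M₁ : ℝ) * (2 * Real.pi / n) with hθ
  have h3 : Complex.exp (((2 * Real.pi - θ : ℝ) : ℂ) * Complex.I)
      = Complex.exp (-((θ : ℂ) * Complex.I)) := by
    rw [show ((2 * Real.pi - θ : ℝ) : ℂ) * Complex.I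
        = 2 * (Real.pi : ℂ) * Complex.I + -((θ : ℂ) * Complex.I) by push_cast; ring,
      Complex.exp_add, Complex.exp_two_pi_mul_I, one_mul]
  rw [h3, show -((θ : ℂ) * Complex.I) = (-(θ : ℂ)) * Complex.I by ring,
    ← Complex.two_cos, ← Complex.ofReal_cos]
  push_cast; ring

lemma sN_symm (n : ℕ) (hn : n ≠ 0) (r : ℕ) (hr : r ≤ n) : sN n (n - r) = sN n r := by
  have hnR : ((n : ℝ)) ≠ 0 := Nat.cast_ne_zero.mpr hn
  rw [sN, sN]
  have h1 : ((n - r : ℕ) : ℝ) = (n : ℝ) - r := by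
    push_cast [Nat.cast_sub hr]; ring
  rw [h1]
  have h2 : ((n : ℝ) - r) * Real.pi / n = Real.pi - (r : ℝ) * Real.pi / n := by
    field_simp
  rw [h2, Real.sin_pi_sub]

lemma sN_pos (n r : ℕ) (h1 : 0 < r) (h2 : r < n) : 0 < sN n r := by
  have hπ := Real.pi_pos
  have hn : (0 : ℝ) < n := by exact_mod_cast h1.trans h2
  have hr : (0 : ℝ) < r := by exact_mod_cast h1
  have hrn : (r : ℝ) < n := by exact_mod_cast h2
  apply mul_pos two_pos
  apply Real.sin_pos_of_pos_of_lt_pi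
  · positivity
  · rw [div_lt_iff₀ hn]
    calc (r : ℝ) * Real.pi < n * Real.pi := by nlinarith
    _ = Real.pi * n := by ring

lemma val_add_natCast (n : ℕ) [NeZero n] (p : Fin n) (m : ℕ) :
    (p + (m : Fin n)).val = (p.val + m) % n := by
  rw [Fin.add_def, Fin.val_natCast]
  conv_rhs => rw [Nat.add_mod, Nat.mod_eq_of_lt p.isLt]

lemma ngon_add (n : ℕ) (hn : n ≠ 0) (a : ℝ) (p : Fin n) (m : ℕ) :
    haveI : NeZero n := ⟨hn⟩
    ngon n a (p + (m : Fin n)) = ngon n a p * ec n m := by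
  haveI : NeZero n := ⟨hn⟩
  show (a : ℂ) * ec n (p + (m : Fin n)).val = (a : ℂ) * ec n p.val * ec n m
  rw [val_add_natCast, ← ec_mod n hn, ec_add, mul_assoc]

lemma ngon_diff (n : ℕ) (hn : n ≠ 0) (a : ℝ) (p : Fin n) (m : ℕ) :
    haveI : NeZero n := ⟨hn⟩
    ngon n a p - ngon n a (p + (m : Fin n)) = ngon n a p * (1 - ec n m) := by
  rw [ngon_add n hn]; ring

lemma normSq_ngon_mul (n : ℕ) (a : ℝ) (p : Fin n) (w : ℂ) :
    Complex.normSq (ngon n a p * w) = a ^ 2 * Complex.normSq w := by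
  rw [ngon, Complex.normSq_mul, Complex.normSq_mul, ec_eq]
  have h1 : Complex.normSq (Complex.exp ((((p.val : ℝ) * (2 * Real.pi / n) : ℝ)) * Complex.I)) = 1 := by
    rw [Complex.normSq_apply, Complex.exp_ofReal_mul_I_re, Complex.exp_ofReal_mul_I_im]
    nlinarith [Real.sin_sq_add_cos_sq ((p.val : ℝ) * (2 * Real.pi / n))]
  rw [h1, Complex.normSq_ofReal]
  ring

lemma normSq_ngon_pos (n : ℕ) (hn3 : 3 ≤ n) (a : ℝ) (ha : 0 < a) (j k : Fin n) (hk : k ≠ j) :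
    0 < Complex.normSq (ngon n a j - ngon n a k) := by
  have hn : n ≠ 0 := by omega
  haveI : NeZero n := ⟨hn⟩
  have hk' : k = j + (((k - j).val : ℕ) : Fin n) := by
    rw [Fin.cast_val_eq_self, add_sub_cancel]
  rw [hk', ngon_diff n hn, normSq_ngon_mul, normSq_one_sub_ec]
  have hne : k - j ≠ 0 := sub_ne_zero.mpr hk
  have h1 : 0 < (k - j).val := by
    rcases Nat.eq_zero_or_pos (k - j).val with h | h
    · exact absurd (Fin.ext h : k - j = 0) hne
    · exact h
  have h2 : (k - j).val < n := (k - j).isLt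
  have := sN_pos n (k - j).val h1 h2
  positivity



/-- complex gradient contribution of the `(p,q)` summand of `chainV`, w.r.t. `u_j`,
at the `n`-gon. -/
noncomputable def gterm (n : ℕ) (U' W' : ℝ → ℝ) (a : ℝ) (j p q : Fin n) : ℂ :=
  if p < q then
    (if p = j then
      ((2 * ((if p.val + 1 = q.val ∨ (p.val = 0 ∧ q.val = n - 1)
            then U' (Complex.normSq (ngon n a j - ngon n a q)) else 0)
          + W' (Complex.normSq (ngon n a j - ngon n a q))) : ℝ) : ℂ)
        * (ngon n a j - ngon n a q)
     else if q = j then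
      ((2 * ((if p.val + 1 = q.val ∨ (p.val = 0 ∧ q.val = n - 1)
            then U' (Complex.normSq (ngon n a j - ngon n a p)) else 0)
          + W' (Complex.normSq (ngon n a j - ngon n a p))) : ℝ) : ℂ)
        * (ngon n a j - ngon n a p)
     else 0)
  else 0

lemma term_hasFDerivAt (n : ℕ) (hn3 : 3 ≤ n) (U W U' W' : ℝ → ℝ)
    (hU : ∀ x > (0 : ℝ), HasDerivAt U (U' x) x)
    (hW : ∀ x > (0 : ℝ), HasDerivAt W (W' x) x)
    (a : ℝ) (ha : 0 < a) (j p q : Fin n) :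
    HasFDerivAt (fun z : ℂ => if p < q then
        ((if p.val + 1 = q.val ∨ (p.val = 0 ∧ q.val = n - 1)
            then U (‖Function.update (ngon n a) j z p
              - Function.update (ngon n a) j z q‖ ^ 2) else 0)
          + W (‖Function.update (ngon n a) j z p
              - Function.update (ngon n a) j z q‖ ^ 2))
        else 0)
      (gradFunctional (gterm n U' W' a j p q)) (ngon n a j) := by
  by_cases hlt : p < q
  · by_cases hpj : p = j
    · subst hpj
      have hqj : q ≠ p := hlt.ne'
      simp only [gterm, if_pos hlt, if_pos rfl, Function.update_self,
        Function.update_of_ne hqj]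
      set x := Complex.normSq (ngon n a p - ngon n a q) with hx
      have hxpos : 0 < x := normSq_ngon_pos n hn3 a ha p q hqj
      have hf : HasDerivAt
          (fun y : ℝ => (if p.val + 1 = q.val ∨ (p.val = 0 ∧ q.val = n - 1)
            then U y else 0) + W y)
          ((if p.val + 1 = q.val ∨ (p.val = 0 ∧ q.val = n - 1)
            then U' x else 0) + W' x) x := by
        by_cases hadj : p.val + 1 = q.val ∨ (p.val = 0 ∧ q.val = n - 1)
        · simp only [if_pos hadj]
          exact (hU x hxpos).add (hW x hxpos)
        · simp only [if_neg hadj]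
          exact (hasDerivAt_const x (0 : ℝ)).add (hW x hxpos)
      exact hasFDerivAt_comp_sq_abs (ngon n a q) (ngon n a p) hf
    · by_cases hqj : q = j
      · subst hqj
        simp only [gterm, if_pos hlt, if_neg hpj, if_pos rfl, Function.update_self,
          Function.update_of_ne hpj]
        have habs : ∀ z : ℂ, ‖ngon n a p - z‖ = ‖z - ngon n a p‖ :=
          fun z => norm_sub_rev _ _
        have hfun : (fun z : ℂ =>
            (if p.val + 1 = q.val ∨ (p.val = 0 ∧ q.val = n - 1)
              then U (‖ngon n a p - z‖ ^ 2) else 0)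
            + W (‖ngon n a p - z‖ ^ 2)) = fun z : ℂ =>
            (if p.val + 1 = q.val ∨ (p.val = 0 ∧ q.val = n - 1)
              then U (‖z - ngon n a p‖ ^ 2) else 0)
            + W (‖z - ngon n a p‖ ^ 2) := by
          funext z; rw [habs z]
        rw [hfun, if_pos trivial]
        set x := Complex.normSq (ngon n a q - ngon n a p) with hx
        have hxpos : 0 < x := normSq_ngon_pos n hn3 a ha q p hpj
        have hf : HasDerivAt
            (fun y : ℝ => (if p.val + 1 = q.val ∨ (p.val = 0 ∧ q.val = n - 1)
              then U y else 0) + W y)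
            ((if p.val + 1 = q.val ∨ (p.val = 0 ∧ q.val = n - 1)
              then U' x else 0) + W' x) x := by
          by_cases hadj : p.val + 1 = q.val ∨ (p.val = 0 ∧ q.val = n - 1)
          · simp only [if_pos hadj]
            exact (hU x hxpos).add (hW x hxpos)
          · simp only [if_neg hadj]
            exact (hasDerivAt_const x (0 : ℝ)).add (hW x hxpos)
        exact hasFDerivAt_comp_sq_abs (ngon n a p) (ngon n a q) hf
      · simp only [gterm, if_pos hlt, if_neg hpj, if_neg hqj, Function.update_of_ne hpj,
          Function.update_of_ne hqj]
        rw [gradFunctional_zero]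
        exact hasFDerivAt_const _ _
  · simp only [gterm, if_neg hlt]
    rw [gradFunctional_zero]
    exact hasFDerivAt_const _ _


lemma pairing (n : ℕ) (hn3 : 3 ≤ n) (c : ℕ → ℝ)
    (hc : ∀ m < n - 1, c (n - 2 - m) = c m) :
    ∑ m ∈ Finset.range (n - 1), (c m : ℂ) * (1 - ec n (m + 1))
      = ((∑ m ∈ Finset.range (n - 1), c m * sN n (m + 1) ^ 2 : ℝ) : ℂ) / 2 := by
  have hn : n ≠ 0 := by omega
  set S := ∑ m ∈ Finset.range (n - 1), (c m : ℂ) * (1 - ec n (m + 1)) with hS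
  have hrefl : S = ∑ m ∈ Finset.range (n - 1), (c m : ℂ) * (1 - ec n (n - 1 - m)) := by
    rw [hS, ← Finset.sum_range_reflect]
    apply Finset.sum_congr rfl
    intro m hm
    rw [Finset.mem_range] at hm
    rw [show n - 1 - 1 - m = n - 2 - m from by omega, hc _ hm,
      show n - 2 - m + 1 = n - 1 - m from by omega]
  have h2S : S + S = ((∑ m ∈ Finset.range (n - 1), c m * sN n (m + 1) ^ 2 : ℝ) : ℂ) := by
    nth_rewrite 2 [hrefl]
    rw [hS, ← Finset.sum_add_distrib, Complex.ofReal_sum]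
    apply Finset.sum_congr rfl
    intro m hm
    rw [Finset.mem_range] at hm
    have hpair := ec_pair n hn (m + 1) (n - 1 - m) (by omega)
    have : (c m : ℂ) * (1 - ec n (m + 1)) + (c m : ℂ) * (1 - ec n (n - 1 - m))
        = (c m : ℂ) * (2 - (ec n (m + 1) + ec n (n - 1 - m))) := by ring
    rw [this, hpair, sN_sq]
    push_cast
    ring
  rw [show S + S = 2 * S from by ring] at h2S
  linear_combination h2S / 2


/-- the radial coefficient for distance index `m+1` -/
noncomputable def phiC (n : ℕ) (U' W' : ℝ → ℝ) (a : ℝ) (m : ℕ) : ℝ :=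
  (if m = 0 ∨ m + 2 = n then U' (a ^ 2 * sN n (m + 1) ^ 2) else 0)
    + W' (a ^ 2 * sN n (m + 1) ^ 2)

lemma gterm_pair_eval (n : ℕ) (hn3 : 3 ≤ n) (U' W' : ℝ → ℝ) (a : ℝ)
    (j : Fin n) (m : ℕ) (hm : m < n - 1) :
    haveI : NeZero n := ⟨by omega⟩
    gterm n U' W' a j j (j + ((m + 1 : ℕ) : Fin n))
      + gterm n U' W' a j (j + ((m + 1 : ℕ) : Fin n)) j
      = 2 * ((phiC n U' W' a m : ℝ) : ℂ) * (ngon n a j * (1 - ec n (m + 1))) := by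
  haveI : NeZero n := ⟨by omega⟩
  have hj := j.isLt
  set k := j + ((m + 1 : ℕ) : Fin n) with hk
  have hkb := k.isLt
  have hkv : k.val = (j.val + (m + 1)) % n := val_add_natCast n j (m + 1)
  have hdiff : ngon n a j - ngon n a k = ngon n a j * (1 - ec n (m + 1)) :=
    ngon_diff n (by omega) a j (m + 1)
  have hns : Complex.normSq (ngon n a j - ngon n a k) = a ^ 2 * sN n (m + 1) ^ 2 := by
    rw [hdiff, normSq_ngon_mul, normSq_one_sub_ec]
  have hKalt : k.val = j.val + (m + 1) ∨ k.val + n = j.val + (m + 1) := by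
    rcases lt_or_ge (j.val + (m + 1)) n with h | h
    · left; rw [hkv, Nat.mod_eq_of_lt h]
    · right
      rw [hkv, Nat.mod_eq_sub_mod h, Nat.mod_eq_of_lt (by omega : j.val + (m + 1) - n < n)]
      omega
  have hne : k ≠ j := by
    intro h
    have hv := congrArg Fin.val h
    rcases hKalt with h1 | h1 <;> omega
  rcases hKalt with hc | hc
  · have hjk : j < k := by rw [Fin.lt_def]; omega
    have hadj : (j.val + 1 = k.val ∨ (j.val = 0 ∧ k.val = n - 1)) = (m = 0 ∨ m + 2 = n) := by
      apply propext; omega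
    simp only [gterm, if_pos hjk, if_pos rfl, if_neg (lt_asymm hjk), hadj, hns]
    rw [hdiff]
    unfold phiC
    push_cast
    ring
  · have hkj : k < j := by rw [Fin.lt_def]; omega
    have hadj : (k.val + 1 = j.val ∨ (k.val = 0 ∧ j.val = n - 1)) = (m = 0 ∨ m + 2 = n) := by
      apply propext; omega
    simp only [gterm, if_pos hkj, if_neg (lt_asymm hkj), if_neg hne, if_pos rfl, hadj, hns]
    rw [hdiff]
    unfold phiC
    push_cast
    ring

lemma phiC_symm (n : ℕ) (hn3 : 3 ≤ n) (U' W' : ℝ → ℝ) (a : ℝ) :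
    ∀ m < n - 1, phiC n U' W' a (n - 2 - m) = phiC n U' W' a m := by
  intro m hm
  unfold phiC
  have h1 : n - 2 - m + 1 = n - (m + 1) := by omega
  rw [h1, sN_symm n (by omega) (m + 1) (by omega)]
  congr 1
  exact if_congr (by omega) rfl rfl

lemma real_sum_eval (n : ℕ) (hn3 : 3 ≤ n) (U' W' : ℝ → ℝ) (a : ℝ) :
    ∑ m ∈ Finset.range (n - 1), phiC n U' W' a m * sN n (m + 1) ^ 2
      = 2 * U' (a ^ 2 * sN n 1 ^ 2) * sN n 1 ^ 2
        + ∑ k ∈ Finset.range (n - 1), W' (a ^ 2 * sN n (k + 1) ^ 2) * sN n (k + 1) ^ 2 := by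
  have hsplit : ∀ m ∈ Finset.range (n - 1), phiC n U' W' a m * sN n (m + 1) ^ 2
      = ((if m = 0 then U' (a ^ 2 * sN n 1 ^ 2) * sN n 1 ^ 2 else 0)
        + (if m = n - 2 then U' (a ^ 2 * sN n 1 ^ 2) * sN n 1 ^ 2 else 0))
        + W' (a ^ 2 * sN n (m + 1) ^ 2) * sN n (m + 1) ^ 2 := by
    intro m hm
    rw [Finset.mem_range] at hm
    unfold phiC
    rw [add_mul]
    congr 1
    by_cases h0 : m = 0
    · subst h0
      rw [if_pos (Or.inl rfl), if_pos rfl, if_neg (by omega : ¬(0 : ℕ) = n - 2), add_zero]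
    · by_cases h2 : m = n - 2
      · subst h2
        rw [if_pos (Or.inr (by omega)), if_neg h0, if_pos rfl, zero_add,
          show n - 2 + 1 = n - 1 from by omega, sN_symm n (by omega) 1 (by omega)]
      · rw [if_neg (by omega : ¬(m = 0 ∨ m + 2 = n)), if_neg h0, if_neg h2]
        ring
  rw [Finset.sum_congr rfl hsplit, Finset.sum_add_distrib, Finset.sum_add_distrib,
    Finset.sum_ite_eq' (Finset.range (n - 1)) 0 (fun _ => U' (a ^ 2 * sN n 1 ^ 2) * sN n 1 ^ 2),
    Finset.sum_ite_eq' (Finset.range (n - 1)) (n - 2) (fun _ => U' (a ^ 2 * sN n 1 ^ 2) * sN n 1 ^ 2),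
    if_pos (Finset.mem_range.mpr (by omega)), if_pos (Finset.mem_range.mpr (by omega))]
  ring

lemma gterm_sum (n : ℕ) (hn3 : 3 ≤ n) (U' W' : ℝ → ℝ) (a : ℝ) (j : Fin n) :
    ∑ p : Fin n, ∑ q : Fin n, gterm n U' W' a j p q
      = ngon n a j * ((2 * U' (a ^ 2 * sN n 1 ^ 2) * sN n 1 ^ 2
          + ∑ k ∈ Finset.range (n - 1),
              W' (a ^ 2 * sN n (k + 1) ^ 2) * sN n (k + 1) ^ 2 : ℝ) : ℂ) := by
  haveI : NeZero n := ⟨by omega⟩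
  have hn : n ≠ 0 := by omega
  have hrow : ∀ p : Fin n, p ≠ j → ∑ q : Fin n, gterm n U' W' a j p q = gterm n U' W' a j p j := by
    intro p hp
    apply Finset.sum_eq_single j
    · intro q _ hq
      simp [gterm, hp, hq]
    · intro h; exact absurd (Finset.mem_univ j) h
  have hdiag : gterm n U' W' a j j j = 0 := by simp [gterm]
  have hmemne : ∀ m : ℕ, m < n - 1 → j + ((m + 1 : ℕ) : Fin n) ≠ j := by
    intro m hm h
    have hv := congrArg Fin.val h
    rw [val_add_natCast] at hv
    have hj := j.isLt
    rcases lt_or_ge (j.val + (m + 1)) n with h' | h'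
    · rw [Nat.mod_eq_of_lt h'] at hv; omega
    · rw [Nat.mod_eq_sub_mod h', Nat.mod_eq_of_lt (by omega : j.val + (m + 1) - n < n)] at hv
      omega
  have hvalpos : ∀ k : Fin n, k ≠ j → 0 < (k - j).val ∧ (k - j).val < n := by
    intro k hk
    refine ⟨?_, (k - j).isLt⟩
    rcases Nat.eq_zero_or_pos (k - j).val with h | h
    · exact absurd (Fin.ext h : k - j = 0) (sub_ne_zero.mpr hk)
    · exact h
  calc ∑ p : Fin n, ∑ q : Fin n, gterm n U' W' a j p q
      = (∑ p ∈ Finset.univ.erase j, ∑ q : Fin n, gterm n U' W' a j p q)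
        + ∑ q : Fin n, gterm n U' W' a j j q :=
        (Finset.sum_erase_add _ _ (Finset.mem_univ j)).symm
    _ = (∑ p ∈ Finset.univ.erase j, gterm n U' W' a j p j)
        + ∑ q ∈ Finset.univ.erase j, gterm n U' W' a j j q := by
        congr 1
        · exact Finset.sum_congr rfl (fun p hp => hrow p (Finset.ne_of_mem_erase hp))
        · exact (Finset.sum_erase _ hdiag).symm
    _ = ∑ k ∈ Finset.univ.erase j, (gterm n U' W' a j j k + gterm n U' W' a j k j) := by
        rw [Finset.sum_add_distrib]; ring
    _ = ∑ m ∈ Finset.range (n - 1), (gterm n U' W' a j j (j + ((m + 1 : ℕ) : Fin n))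
          + gterm n U' W' a j (j + ((m + 1 : ℕ) : Fin n)) j) := by
        refine Finset.sum_bij' (fun k _ => (k - j).val - 1)
          (fun m _ => j + ((m + 1 : ℕ) : Fin n)) ?_ ?_ ?_ ?_ ?_
        · intro k hk
          have h := hvalpos k (Finset.ne_of_mem_erase hk)
          exact Finset.mem_range.mpr (by omega)
        · intro m hm
          exact Finset.mem_erase.mpr ⟨hmemne m (Finset.mem_range.mp hm), Finset.mem_univ _⟩
        · intro k hk
          have h := hvalpos k (Finset.ne_of_mem_erase hk)
          rw [Nat.sub_add_cancel h.1, Fin.cast_val_eq_self, add_comm, sub_add_cancel]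
        · intro m hm
          rw [add_sub_cancel_left, Fin.val_natCast,
            Nat.mod_eq_of_lt (by have := Finset.mem_range.mp hm; omega), Nat.add_sub_cancel]
        · intro k hk
          have h := hvalpos k (Finset.ne_of_mem_erase hk)
          have hkk : j + (((k - j).val - 1 + 1 : ℕ) : Fin n) = k := by
            rw [Nat.sub_add_cancel h.1, Fin.cast_val_eq_self, add_comm, sub_add_cancel]
          rw [hkk]
    _ = ∑ m ∈ Finset.range (n - 1),
          2 * ((phiC n U' W' a m : ℝ) : ℂ) * (ngon n a j * (1 - ec n (m + 1))) :=
        Finset.sum_congr rfl (fun m hm =>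
          gterm_pair_eval n hn3 U' W' a j m (Finset.mem_range.mp hm))
    _ = (2 * ngon n a j) * ∑ m ∈ Finset.range (n - 1),
          ((phiC n U' W' a m : ℝ) : ℂ) * (1 - ec n (m + 1)) := by
        rw [Finset.mul_sum]
        exact Finset.sum_congr rfl (fun m _ => by ring)
    _ = (2 * ngon n a j) * (((∑ m ∈ Finset.range (n - 1),
          phiC n U' W' a m * sN n (m + 1) ^ 2 : ℝ) : ℂ) / 2) := by
        rw [pairing n hn3 _ (phiC_symm n hn3 U' W' a)]
    _ = ngon n a j * ((∑ m ∈ Finset.range (n - 1),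
          phiC n U' W' a m * sN n (m + 1) ^ 2 : ℝ) : ℂ) := by ring
    _ = ngon n a j * ((2 * U' (a ^ 2 * sN n 1 ^ 2) * sN n 1 ^ 2
          + ∑ k ∈ Finset.range (n - 1),
              W' (a ^ 2 * sN n (k + 1) ^ 2) * sN n (k + 1) ^ 2 : ℝ) : ℂ) := by
        rw [real_sum_eval n hn3 U' W' a]


lemma main_grad (n : ℕ) (hn3 : 3 ≤ n) (U W U' W' : ℝ → ℝ)
    (hU : ∀ x > (0 : ℝ), HasDerivAt U (U' x) x)
    (hW : ∀ x > (0 : ℝ), HasDerivAt W (W' x) x)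
    (a : ℝ) (ha : 0 < a) (j : Fin n) :
    HasFDerivAt (fun z : ℂ => chainV n U W (Function.update (ngon n a) j z))
      (gradFunctional (ngon n a j * ((2 * U' (a ^ 2 * sN n 1 ^ 2) * sN n 1 ^ 2
          + ∑ k ∈ Finset.range (n - 1),
              W' (a ^ 2 * sN n (k + 1) ^ 2) * sN n (k + 1) ^ 2 : ℝ) : ℂ)))
      (ngon n a j) := by
  have h : HasFDerivAt
      (fun z : ℂ => ∑ p : Fin n, ∑ q : Fin n, (if p < q then
        ((if p.val + 1 = q.val ∨ (p.val = 0 ∧ q.val = n - 1)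
            then U (‖Function.update (ngon n a) j z p
              - Function.update (ngon n a) j z q‖ ^ 2) else 0)
          + W (‖Function.update (ngon n a) j z p
              - Function.update (ngon n a) j z q‖ ^ 2))
        else 0))
      (∑ p : Fin n, ∑ q : Fin n, gradFunctional (gterm n U' W' a j p q)) (ngon n a j) :=
    HasFDerivAt.fun_sum (fun p _ =>
      HasFDerivAt.fun_sum (fun q _ => term_hasFDerivAt n hn3 U W U' W' hU hW a ha j p q))
  have h2 : ∑ p : Fin n, ∑ q : Fin n, gradFunctional (gterm n U' W' a j p q)
      = gradFunctional (ngon n a j * ((2 * U' (a ^ 2 * sN n 1 ^ 2) * sN n 1 ^ 2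
          + ∑ k ∈ Finset.range (n - 1),
              W' (a ^ 2 * sN n (k + 1) ^ 2) * sN n (k + 1) ^ 2 : ℝ) : ℂ)) := by
    rw [← gterm_sum n hn3 U' W' a j, gradFunctional_sum]
    exact Finset.sum_congr rfl fun p _ => (gradFunctional_sum _ _).symm
  rw [h2] at h
  exact h

lemma coeff_zero (n : ℕ) (hn3 : 3 ≤ n) (U' W' : ℝ → ℝ) (a : ℝ)
    (hcrit : U' (a ^ 2 * sN n 1 ^ 2)
        = -(1 / (2 * sN n 1 ^ 2))
            * ∑ k ∈ Finset.range (n - 1), W' (a ^ 2 * sN n (k + 1) ^ 2) * sN n (k + 1) ^ 2) :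
    (2 * U' (a ^ 2 * sN n 1 ^ 2) * sN n 1 ^ 2
      + ∑ k ∈ Finset.range (n - 1), W' (a ^ 2 * sN n (k + 1) ^ 2) * sN n (k + 1) ^ 2 : ℝ)
      = 0 := by
  have hs : sN n 1 ≠ 0 := ne_of_gt (sN_pos n 1 one_pos (by omega))
  rw [hcrit]
  field_simp
  ring

lemma main_crit (n : ℕ) (hn3 : 3 ≤ n) (U W U' W' : ℝ → ℝ)
    (hU : ∀ x > (0 : ℝ), HasDerivAt U (U' x) x)
    (hW : ∀ x > (0 : ℝ), HasDerivAt W (W' x) x)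
    (a : ℝ) (ha : 0 < a)
    (hcrit : U' (a ^ 2 * sN n 1 ^ 2)
        = -(1 / (2 * sN n 1 ^ 2))
            * ∑ k ∈ Finset.range (n - 1), W' (a ^ 2 * sN n (k + 1) ^ 2) * sN n (k + 1) ^ 2)
    (j : Fin n) :
    HasFDerivAt (fun z : ℂ => chainV n U W (Function.update (ngon n a) j z))
      (0 : ℂ →L[ℝ] ℝ) (ngon n a j) := by
  have h1 := main_grad n hn3 U W U' W' hU hW a ha j
  rw [coeff_zero n hn3 U' W' a hcrit] at h1
  rw [Complex.ofReal_zero, mul_zero, gradFunctional_zero] at h1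
  exact h1


end Stmt10Aux

/-- At the regular `n`-gon `a_j = a e^{ijζ}` (`ζ = 2π/n`), the gradient of `V` with
respect to `u_j` equals `a_j (2U'(a²s₁²)s₁² + Σ_{k=1}^{n-1} W'(a²s_k²)s_k²)`, where
`s_k = 2 sin(kπ/n)`. In particular, if `U'(a²s₁²) = -(1/(2s₁²)) Σ_k W'(a²s_k²)s_k²`,
then the `n`-gon is a critical point of `V`. -/
theorem stmt10 (n : ℕ) (hn : 3 ≤ n) (U W U' W' : ℝ → ℝ)
    (hU : ∀ x > (0 : ℝ), HasDerivAt U (U' x) x)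
    (hW : ∀ x > (0 : ℝ), HasDerivAt W (W' x) x)
    (a : ℝ) (ha : 0 < a) :
    letI ζ : ℝ := 2 * Real.pi / n
    letI s : ℕ → ℝ := fun k => 2 * Real.sin ((k : ℝ) * Real.pi / n)
    letI pt : Fin n → ℂ := fun j => (a : ℂ) * Complex.exp (Complex.I * (j.val : ℂ) * (ζ : ℂ))
    letI G : Fin n → ℂ := fun j => pt j *
      ((2 * U' (a ^ 2 * (s 1) ^ 2) * (s 1) ^ 2
          + ∑ k ∈ Finset.range (n - 1), W' (a ^ 2 * (s (k + 1)) ^ 2) * (s (k + 1)) ^ 2 : ℝ) : ℂ)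
    (∀ j : Fin n,
        HasFDerivAt (fun z : ℂ => chainV n U W (Function.update pt j z))
          (gradFunctional (G j)) (pt j)) ∧
    (U' (a ^ 2 * (s 1) ^ 2)
          = -(1 / (2 * (s 1) ^ 2))
              * ∑ k ∈ Finset.range (n - 1), W' (a ^ 2 * (s (k + 1)) ^ 2) * (s (k + 1)) ^ 2 →
      ∀ j : Fin n,
        HasFDerivAt (fun z : ℂ => chainV n U W (Function.update pt j z))
          (0 : ℂ →L[ℝ] ℝ) (pt j)) :=
  ⟨fun j => Stmt10Aux.main_grad n hn U W U' W' hU hW a ha j,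
   fun hcrit j => Stmt10Aux.main_crit n hn U W U' W' hU hW a ha hcrit j⟩
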